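/- Suppose n = d and a_i = e_i is the i-th standard basis vector of ℝ^d for each i. Then for every k with 1 ≤ k ≤ d−1: (a) every subset S of size k satisfies f(S) = k/(1+λ) + (d−k)/λ, so z_k = k/(1+λ) + (d−k)/λ; (b) ν_k^C ≤ d·n/(k + n·λ); and consequently (c) z_k/ν_k^C ≥ k(d−k)/(d·n·λ), which tends to infinity as λ → 0⁺. -/

import Mathlib

open Matrix Finset

noncomputable section


/-- The information matrix `∑_{i ∈ S} a_i a_iᵀ + λ I_d`. -/
def infoM (d n : ℕ) (a : Fin n → Fin d → ℝ) (lam : ℝ) (S : Finset (Fin n)) :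
    Matrix (Fin d) (Fin d) ℝ :=
  (∑ i ∈ S, Matrix.vecMulVec (a i) (a i)) + lam • (1 : Matrix (Fin d) (Fin d) ℝ)

/-- `f(S) = tr((∑_{i∈S} a_i a_iᵀ + λ I_d)⁻¹)`. -/
def fS (d n : ℕ) (a : Fin n → Fin d → ℝ) (lam : ℝ) (S : Finset (Fin n)) : ℝ :=
  Matrix.trace (infoM d n a lam S)⁻¹

/-- `z_k = min_{|S| = k} f(S)`. -/
def zk (d n : ℕ) (a : Fin n → Fin d → ℝ) (lam : ℝ) (k : ℕ) : ℝ :=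
  sInf {r : ℝ | ∃ S : Finset (Fin n), S.card = k ∧ fS d n a lam S = r}

/-- The matrix `∑_i x_i a_i a_iᵀ + λ I_d` for a fractional vector `x`. -/
def contM (d n : ℕ) (a : Fin n → Fin d → ℝ) (lam : ℝ) (x : Fin n → ℝ) :
    Matrix (Fin d) (Fin d) ℝ :=
  (∑ i : Fin n, x i • Matrix.vecMulVec (a i) (a i)) + lam • (1 : Matrix (Fin d) (Fin d) ℝ)

/-- The continuous relaxation value `ν_k^C`. -/
def nuC (d n : ℕ) (a : Fin n → Fin d → ℝ) (lam : ℝ) (k : ℕ) : ℝ :=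
  sInf {r : ℝ | ∃ x : Fin n → ℝ, (∀ i, 0 ≤ x i ∧ x i ≤ 1) ∧ (∑ i, x i) = (k : ℝ) ∧
    Matrix.trace (contM d n a lam x)⁻¹ = r}

end

lemma diag_inv' (d : ℕ) (v : Fin d → ℝ) (hv : ∀ i, v i ≠ 0) :
    (Matrix.diagonal v)⁻¹ = Matrix.diagonal (fun i => (v i)⁻¹) := by
  apply Matrix.inv_eq_right_inv
  rw [Matrix.diagonal_mul_diagonal]
  convert Matrix.diagonal_one with i
  exact mul_inv_cancel₀ (hv i)

lemma cont_diag' (d : ℕ) (a : Fin d → Fin d → ℝ) (ha : ∀ i j, a i j = if j = i then 1 else 0)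
    (lam : ℝ) (x : Fin d → ℝ) :
    contM d d a lam x = Matrix.diagonal (fun j => x j + lam) := by
  unfold contM
  ext j l
  simp only [Matrix.add_apply, Matrix.sum_apply, Matrix.vecMulVec_apply, ha,
    Matrix.smul_apply, Matrix.one_apply, Matrix.diagonal_apply, smul_eq_mul]
  by_cases hjl : j = l
  · subst hjl
    simp [Finset.sum_ite_eq, mul_ite]
  · simp only [hjl, if_false, mul_zero, add_zero]
    rw [show (0:ℝ) = ∑ i : Fin d, 0 from (Finset.sum_const_zero).symm]
    apply Finset.sum_congr rfl
    intro i hi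
    by_cases h1 : j = i <;> by_cases h2 : l = i <;> simp [h1, h2] <;> simp_all

lemma cont_trace' (d : ℕ) (a : Fin d → Fin d → ℝ)
    (ha : ∀ i j, a i j = if j = i then 1 else 0)
    (lam : ℝ) (hlam : 0 < lam) (x : Fin d → ℝ) (hx : ∀ i, 0 ≤ x i) :
    Matrix.trace (contM d d a lam x)⁻¹ = ∑ i : Fin d, (x i + lam)⁻¹ := by
  rw [cont_diag' d a ha, diag_inv' d _ (fun i => by have := hx i; positivity),
    Matrix.trace_diagonal]

lemma fS_formula' (d : ℕ) (a : Fin d → Fin d → ℝ)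
    (ha : ∀ i j, a i j = if j = i then 1 else 0)
    (lam : ℝ) (hlam : 0 < lam) (S : Finset (Fin d)) :
    fS d d a lam S = (S.card : ℝ) / (1 + lam) + ((d : ℝ) - S.card) / lam := by
  have h1 : (0:ℝ) < 1 + lam := by linarith
  have hdiag : infoM d d a lam S
      = Matrix.diagonal (fun j => if j ∈ S then 1 + lam else lam) := by
    unfold infoM
    ext j l
    simp only [Matrix.add_apply, Matrix.sum_apply, Matrix.vecMulVec_apply, ha,
      Matrix.smul_apply, Matrix.one_apply, Matrix.diagonal_apply, smul_eq_mul]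
    by_cases hjl : j = l
    · subst hjl
      simp [Finset.sum_ite_eq, mul_ite]
      by_cases hjS : j ∈ S <;> simp [hjS]
    · simp only [hjl, if_false, mul_zero, add_zero]
      rw [show (0:ℝ) = ∑ i ∈ S, 0 from (Finset.sum_const_zero).symm]
      apply Finset.sum_congr rfl
      intro i hi
      by_cases h1 : j = i <;> by_cases h2 : l = i <;> simp [h1, h2] <;> simp_all
  rw [fS, hdiag, diag_inv']
  · rw [Matrix.trace_diagonal]
    rw [← Finset.sum_add_sum_compl S]
    have e1 : ∑ j ∈ S, (if j ∈ S then (1+lam) else lam)⁻¹ = (S.card : ℝ) * (1+lam)⁻¹ := by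
      rw [Finset.sum_congr rfl (fun j hj => by rw [if_pos hj]), Finset.sum_const,
        nsmul_eq_mul]
    have e2 : ∑ j ∈ Sᶜ, (if j ∈ S then (1+lam) else lam)⁻¹ = ((d : ℝ) - S.card) * lam⁻¹ := by
      rw [Finset.sum_congr rfl (fun j hj => by rw [if_neg (Finset.mem_compl.mp hj)]),
        Finset.sum_const, nsmul_eq_mul, Finset.card_compl, Fintype.card_fin,
        Nat.cast_sub (Finset.card_le_card (Finset.subset_univ S) |>.trans_eq (by simp))]
    rw [e1, e2, div_eq_mul_inv, div_eq_mul_inv]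
  · intro i
    by_cases hi : i ∈ S <;> simp [hi] <;> positivity


theorem stmt5 (d : ℕ) (hd : 1 ≤ d)
    (a : Fin d → Fin d → ℝ) (ha : ∀ i j, a i j = if j = i then 1 else 0)
    (lam : ℝ) (hlam : 0 < lam)
    (k : ℕ) (hk1 : 1 ≤ k) (hkd : k < d) :
    ((∀ S : Finset (Fin d), S.card = k →
        fS d d a lam S = (k : ℝ) / (1 + lam) + ((d : ℝ) - k) / lam) ∧
      zk d d a lam k = (k : ℝ) / (1 + lam) + ((d : ℝ) - k) / lam) ∧
    nuC d d a lam k ≤ (d : ℝ) * d / ((k : ℝ) + (d : ℝ) * lam) ∧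
    ((k : ℝ) * ((d : ℝ) - k) / ((d : ℝ) * (d : ℝ) * lam) ≤
      zk d d a lam k / nuC d d a lam k) ∧
    Filter.Tendsto (fun l : ℝ => (k : ℝ) * ((d : ℝ) - k) / ((d : ℝ) * (d : ℝ) * l))
      (nhdsWithin 0 (Set.Ioi 0)) Filter.atTop := by
  have hdR : (0:ℝ) < d := by exact_mod_cast hd
  have hkR : (0:ℝ) < k := by exact_mod_cast hk1
  have hkdR : (k:ℝ) < d := by exact_mod_cast hkd
  have h1l : (0:ℝ) < 1 + lam := by linarith
  set Z : ℝ := (k : ℝ) / (1 + lam) + ((d : ℝ) - k) / lam with hZdef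
  -- part (a): formula for each S of card k
  have partA : ∀ S : Finset (Fin d), S.card = k → fS d d a lam S = Z := by
    intro S hS
    rw [fS_formula' d a ha lam hlam S, hS]
  -- part (a2): zk equals Z
  have hzk : zk d d a lam k = Z := by
    have hset : {r : ℝ | ∃ S : Finset (Fin d), S.card = k ∧ fS d d a lam S = r} = {Z} := by
      ext r
      constructor
      · rintro ⟨S, hS, rfl⟩
        exact partA S hS
      · rintro rfl
        obtain ⟨S, -, hS⟩ := Finset.exists_subset_card_eq (s := (Finset.univ : Finset (Fin d))) (n := k)
          (by simpa using hkd.le)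
        exact ⟨S, hS, partA S hS⟩
    rw [zk, hset, csInf_singleton]
  -- nuC : bounds
  set T : Set ℝ := {r : ℝ | ∃ x : Fin d → ℝ, (∀ i, 0 ≤ x i ∧ x i ≤ 1) ∧
      (∑ i, x i) = (k : ℝ) ∧ Matrix.trace (contM d d a lam x)⁻¹ = r} with hTdef
  have hTval : ∀ r ∈ T, (d : ℝ) / (1 + lam) ≤ r := by
    rintro r ⟨x, hx, hxs, rfl⟩
    rw [cont_trace' d a ha lam hlam x (fun i => (hx i).1)]
    calc (d : ℝ) / (1 + lam) = ∑ _i : Fin d, (1 + lam)⁻¹ := by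
          rw [Finset.sum_const, Finset.card_univ, Fintype.card_fin, nsmul_eq_mul,
            div_eq_mul_inv]
      _ ≤ ∑ i : Fin d, (x i + lam)⁻¹ := by
          apply Finset.sum_le_sum
          intro i _
          have h1 : 0 < x i + lam := by have := (hx i).1; linarith
          exact inv_anti₀ h1 (by have := (hx i).2; linarith)
  have hTbdd : BddBelow T := ⟨(d : ℝ) / (1 + lam), hTval⟩
  have hmem : (d : ℝ) * d / ((k : ℝ) + (d : ℝ) * lam) ∈ T := by
    refine ⟨fun _ => (k : ℝ) / d, fun i => ⟨by positivity, by
      rw [div_le_one hdR]; linarith⟩, ?_, ?_⟩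
    · rw [Finset.sum_const, Finset.card_univ, Fintype.card_fin, nsmul_eq_mul]
      field_simp
    · rw [cont_trace' d a ha lam hlam _ (fun i => by positivity)]
      rw [Finset.sum_const, Finset.card_univ, Fintype.card_fin, nsmul_eq_mul]
      have hkd0 : (k : ℝ) / d + lam ≠ 0 := by positivity
      have h2 : (k : ℝ) + (d:ℝ) * lam ≠ 0 := by positivity
      field_simp
  have hnuC_le : nuC d d a lam k ≤ (d : ℝ) * d / ((k : ℝ) + (d : ℝ) * lam) :=
    csInf_le hTbdd hmem
  have hnuC_ge : (d : ℝ) / (1 + lam) ≤ nuC d d a lam k :=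
    le_csInf ⟨_, hmem⟩ hTval
  have hnuC_pos : 0 < nuC d d a lam k := lt_of_lt_of_le (by positivity) hnuC_ge
  refine ⟨⟨partA, hzk⟩, hnuC_le, ?_, ?_⟩
  · -- part (c)
    rw [hzk]
    have h02 : 0 ≤ ((d:ℝ) - k) / lam := by
      apply div_nonneg <;> linarith
    have hZ0 : 0 ≤ Z := by
      have h01 : 0 ≤ (k:ℝ) / (1 + lam) := by positivity
      rw [hZdef]; linarith
    have hZ1 : ((d:ℝ) - k) / lam ≤ Z := by
      rw [hZdef]
      have : 0 ≤ (k : ℝ) / (1 + lam) := by positivity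
      linarith
    have hNk : nuC d d a lam k ≤ (d : ℝ) * d / (k : ℝ) := by
      refine hnuC_le.trans ?_
      exact div_le_div_of_nonneg_left (by positivity) hkR (by nlinarith)
    have key : (((d:ℝ) - k) / lam) / ((d : ℝ) * d / (k : ℝ)) ≤ Z / nuC d d a lam k :=
      div_le_div₀ hZ0 hZ1 hnuC_pos hNk
    refine le_trans (le_of_eq ?_) key
    field_simp
  · -- part (d)
    have h : (fun l : ℝ => (k : ℝ) * ((d : ℝ) - k) / ((d : ℝ) * (d : ℝ) * l))
        = fun l : ℝ => ((k : ℝ) * ((d : ℝ) - k) / ((d : ℝ) * (d : ℝ))) * l⁻¹ := by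
      funext l
      rw [div_eq_mul_inv, div_eq_mul_inv, mul_inv, ← mul_assoc]
    rw [h]
    exact Filter.Tendsto.const_mul_atTop
      (div_pos (mul_pos hkR (by linarith)) (by positivity)) tendsto_inv_nhdsGT_zero
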